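/- arXiv:0801.0574 — 2 statements merged into one kernel-verified Lean document; each statement's English description precedes it below -/
import Mathlib

section
/- Let ĝ = g ⊕ V be a Z/2-graded complex Lie algebra ([g,g] ⊆ g, [g,V] ⊆ V, [V,V] ⊆ g) with Killing form β. Let σ be a conjugate-linear Lie algebra involution of g and σ̃ a conjugate-linear involution of V with σ̃[Z, x] = [σZ, σ̃x] for Z ∈ g, x ∈ V. If β(σ̃x, σ̃y) = conj(β(x,y)) for all x, y ∈ V and β(σZ₁, σZ₂) = conj(β(Z₁, Z₂)) for Z₁, Z₂ ∈ g, and β is nondegenerate on g, then σ[x,y] = [σ̃x, σ̃y] for all x, y ∈ V; consequently g^σ ⊕ V^σ̃ is a real Lie subalgebra of ĝ. -/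
/-- For a Z/2-graded complex Lie algebra ĝ = g ⊕ V with Killing form β
nondegenerate on g, and a conjugation τ (σ on g, σ̃ on V) compatible with β and with the
brackets g×g and g×V, one has σ[x,y] = [σ̃x, σ̃y] for x, y ∈ V; consequently the fixed
point set g^σ ⊕ V^σ̃ is a real Lie subalgebra. -/
theorem stmt16 (L : Type*) [LieRing L] [LieAlgebra ℂ L] [Module.Finite ℂ L]
    (g V : Submodule ℂ L)
    (hcompl : IsCompl g V)
    (hgg : ∀ x ∈ g, ∀ y ∈ g, ⁅x, y⁆ ∈ g)
    (hgV : ∀ x ∈ g, ∀ y ∈ V, ⁅x, y⁆ ∈ V)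
    (hVV : ∀ x ∈ V, ∀ y ∈ V, ⁅x, y⁆ ∈ g)
    (τ : L → L)
    (hadd : ∀ x y, τ (x + y) = τ x + τ y)
    (hsmul : ∀ (c : ℂ) (x : L), τ (c • x) = starRingEnd ℂ c • τ x)
    (hinv : ∀ x, τ (τ x) = x)
    (hτg : ∀ x ∈ g, τ x ∈ g)
    (hτV : ∀ x ∈ V, τ x ∈ V)
    (hLiegg : ∀ x ∈ g, ∀ y ∈ g, τ ⁅x, y⁆ = ⁅τ x, τ y⁆)
    (hLiegV : ∀ x ∈ g, ∀ y ∈ V, τ ⁅x, y⁆ = ⁅τ x, τ y⁆)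
    (hβV : ∀ x ∈ V, ∀ y ∈ V,
      killingForm ℂ L (τ x) (τ y) = starRingEnd ℂ (killingForm ℂ L x y))
    (hβg : ∀ x ∈ g, ∀ y ∈ g,
      killingForm ℂ L (τ x) (τ y) = starRingEnd ℂ (killingForm ℂ L x y))
    (hnd : ∀ x ∈ g, (∀ y ∈ g, killingForm ℂ L x y = 0) → x = 0) :
    (∀ x ∈ V, ∀ y ∈ V, τ ⁅x, y⁆ = ⁅τ x, τ y⁆) ∧
    (∀ a b : L, τ a = a → τ b = b → τ ⁅a, b⁆ = ⁅a, b⁆) := by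
  have hzero : τ 0 = 0 := by
    have := hsmul 0 0; simpa using this
  have hneg : ∀ x, τ (-x) = -τ x := by
    intro x
    have h := hadd x (-x)
    rw [add_neg_cancel, hzero] at h
    exact eq_neg_of_add_eq_zero_right h.symm
  -- equivariance for V × g brackets
  have hLieVg : ∀ x ∈ V, ∀ y ∈ g, τ ⁅x, y⁆ = ⁅τ x, τ y⁆ := by
    intro x hx y hy
    have : ⁅x, y⁆ = -⁅y, x⁆ := (lie_skew x y).symm
    rw [this, hneg, hLiegV y hy x hx, ← lie_skew, neg_neg]
  -- the key part: equivariance on V × V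
  have hVVkey : ∀ x ∈ V, ∀ y ∈ V, τ ⁅x, y⁆ = ⁅τ x, τ y⁆ := by
    intro x hx y hy
    have hd : τ ⁅x, y⁆ - ⁅τ x, τ y⁆ ∈ g :=
      sub_mem (hτg _ (hVV x hx y hy)) (hVV _ (hτV x hx) _ (hτV y hy))
    have key : ∀ Z ∈ g, killingForm ℂ L (τ ⁅x, y⁆ - ⁅τ x, τ y⁆) Z = 0 := by
      intro Z hZ
      set W := τ Z with hW
      have hWg : W ∈ g := hτg Z hZ
      have hZW : Z = τ W := (hinv Z).symm
      have h1 : killingForm ℂ L (τ ⁅x, y⁆) (τ W)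
          = starRingEnd ℂ (killingForm ℂ L ⁅x, y⁆ W) :=
        hβg _ (hVV x hx y hy) _ hWg
      have h2 : killingForm ℂ L ⁅τ x, τ y⁆ (τ W)
          = starRingEnd ℂ (killingForm ℂ L ⁅x, y⁆ W) := by
        have hbr : ⁅τ y, τ W⁆ = τ ⁅y, W⁆ := (hLieVg y hy W hWg).symm
        have hyW : ⁅y, W⁆ ∈ V := by
          have : ⁅y, W⁆ = -⁅W, y⁆ := (lie_skew y W).symm
          rw [this]; exact neg_mem (hgV W hWg y hy)
        calc killingForm ℂ L ⁅τ x, τ y⁆ (τ W)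
            = killingForm ℂ L (τ x) ⁅τ y, τ W⁆ :=
              LieModule.traceForm_apply_lie_apply ℂ L L _ _ _
          _ = killingForm ℂ L (τ x) (τ ⁅y, W⁆) := by rw [hbr]
          _ = starRingEnd ℂ (killingForm ℂ L x ⁅y, W⁆) := hβV x hx _ hyW
          _ = starRingEnd ℂ (killingForm ℂ L ⁅x, y⁆ W) := by
              rw [LieModule.traceForm_apply_lie_apply ℂ L L]
      rw [hZW]
      simp only [map_sub, LinearMap.sub_apply, h1, h2, sub_self]
    have := hnd _ hd key
    exact sub_eq_zero.mp this
  refine ⟨hVVkey, ?_⟩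
  -- full equivariance
  have hfull : ∀ a b : L, τ ⁅a, b⁆ = ⁅τ a, τ b⁆ := by
    intro a b
    obtain ⟨ag, hag, av, hav, rfl⟩ : ∃ p ∈ g, ∃ q ∈ V, p + q = a := by
      have : a ∈ g ⊔ V := by rw [hcompl.sup_eq_top]; trivial
      exact Submodule.mem_sup.mp this
    obtain ⟨bg, hbg, bv, hbv, rfl⟩ : ∃ p ∈ g, ∃ q ∈ V, p + q = b := by
      have : b ∈ g ⊔ V := by rw [hcompl.sup_eq_top]; trivial
      exact Submodule.mem_sup.mp this
    simp only [lie_add, add_lie, hadd]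
    rw [hLiegg ag hag bg hbg, hLiegV ag hag bv hbv, hLieVg av hav bg hbg,
      hVVkey av hav bv hbv]
  intro a b ha hb
  rw [hfull, ha, hb]
end

section
/- Let K be a compact group acting linearly and orthogonally on a finite-dimensional real inner product space (W, ⟨·,·⟩) with ⟨·,·⟩ positive-definite. Let Σ ⊆ W be a subspace such that for some v ∈ Σ, the tangent space k·v of the orbit satisfies k·v ⊕ Σ = W and ⟨k·w, Σ⟩ with w ∈ Σ is always orthogonal to Σ (i.e. ⟨X·w, u⟩ = 0 for all X ∈ k, w, u ∈ Σ). Then Σ meets every K-orbit: for every x ∈ W there exists k ∈ K with k·x ∈ Σ. -/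
open NormedSpace in
/-- A section Σ for a compact group action (orthogonally complementary to
the orbit tangent space at a point, with the orbit directions of Σ orthogonal to Σ)
meets every orbit. -/
theorem stmt19 (K W : Type*) [Group K] [TopologicalSpace K] [CompactSpace K]
    [IsTopologicalGroup K]
    [NormedAddCommGroup W] [InnerProductSpace ℝ W] [FiniteDimensional ℝ W]
    (ρ : K →* (W ≃ₗᵢ[ℝ] W))
    (hcont : Continuous fun p : K × W => ρ p.1 p.2)
    (𝔨 : Set (W →L[ℝ] W))
    (hskew : ∀ A ∈ 𝔨, ∀ x y : W, (inner ℝ (A x) y : ℝ) = -(inner ℝ x (A y) : ℝ))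
    -- 𝔨 is the Lie algebra of K: the flows exp(tA) are realized by elements of K
    (hexp : ∀ A ∈ 𝔨, ∀ t : ℝ, ∃ k : K, ∀ w : W, ρ k w = NormedSpace.exp (t • A) w)
    (Sec : Submodule ℝ W) (v : W) (hv : v ∈ Sec)
    -- k·v ⊕ Σ = W
    (hcompl : IsCompl (Submodule.span ℝ {w : W | ∃ A ∈ 𝔨, A v = w}) Sec)
    -- ⟨X·w, u⟩ = 0 for all X ∈ k, w, u ∈ Σ
    (horth : ∀ A ∈ 𝔨, ∀ w ∈ Sec, ∀ u ∈ Sec, (inner ℝ (A w) u : ℝ) = 0) :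
    ∀ x : W, ∃ k : K, ρ k x ∈ Sec := by
  intro x
  set S : Set W := {w : W | ∃ A ∈ 𝔨, A v = w} with hS
  set T : Submodule ℝ W := Submodule.span ℝ S with hT
  -- Sec ≤ Tᗮ
  have hTle : T ≤ Secᗮ := by
    rw [hT, Submodule.span_le]
    rintro _ ⟨A, hA, rfl⟩
    rw [SetLike.mem_coe, Submodule.mem_orthogonal]
    intro u hu
    have := hskew A hA u v
    rw [horth A hA u hu v hv] at this
    linarith [this]
  have hSecle : Sec ≤ Tᗮ := by
    calc Sec ≤ Secᗮᗮ := Submodule.le_orthogonal_orthogonal Sec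
    _ ≤ Tᗮ := Submodule.orthogonal_le hTle
  -- Sec = Tᗮ by dimension count
  have hSec : Sec = Tᗮ := by
    apply Submodule.eq_of_le_of_finrank_eq hSecle
    have h1 : Module.finrank ℝ T + Module.finrank ℝ Sec = Module.finrank ℝ W :=
      Submodule.finrank_add_eq_of_isCompl hcompl
    have h2 : Module.finrank ℝ T + Module.finrank ℝ Tᗮ = Module.finrank ℝ W :=
      Submodule.finrank_add_finrank_orthogonal T
    omega
  -- find the minimizer
  have hc : Continuous fun k : K => ‖ρ k x - v‖ :=
    ((hcont.comp (continuous_id.prodMk continuous_const)).sub continuous_const).norm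
  obtain ⟨k₀, -, hmin⟩ := isCompact_univ.exists_isMinOn (Set.univ_nonempty) hc.continuousOn
  refine ⟨k₀, ?_⟩
  set y : W := ρ k₀ x with hy
  have hmin' : ∀ k : K, ‖y - v‖ ≤ ‖ρ k x - v‖ := fun k => hmin (Set.mem_univ k)
  -- key: y ⊥ A v for all A ∈ 𝔨
  have key : ∀ A ∈ 𝔨, (inner ℝ (A v) y : ℝ) = 0 := by
    intro A hA
    -- the curve t ↦ exp (t • A) y
    have hg : HasDerivAt (fun t : ℝ => exp (t • A) y) (A y) 0 := by
      have h1 : HasDerivAt (fun t : ℝ => exp (t • A))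
          (exp ((0:ℝ) • A) * A) 0 := hasDerivAt_exp_smul_const A 0
      have h2 := (ContinuousLinearMap.apply ℝ W y).hasFDerivAt.comp_hasDerivAt 0 h1
      simpa [zero_smul, exp_zero, Function.comp_def] using h2
    have hf : HasDerivAt (fun t : ℝ => (inner ℝ (exp (t • A) y - v) (exp (t • A) y - v) : ℝ))
        ((inner ℝ ((exp ((0:ℝ) • A) y) - v) (A y) : ℝ)
          + (inner ℝ (A y) ((exp ((0:ℝ) • A) y) - v) : ℝ)) 0 :=
      (hg.sub_const v).inner ℝ (hg.sub_const v)
    have hlm : IsLocalMin (fun t : ℝ => (inner ℝ (exp (t • A) y - v) (exp (t • A) y - v) : ℝ)) 0 := by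
      apply Filter.Eventually.of_forall
      intro t
      obtain ⟨k, hk⟩ := hexp A hA t
      have h0 : exp ((0:ℝ) • A) y = y := by simp [zero_smul, exp_zero]
      simp only
      rw [real_inner_self_eq_norm_sq, real_inner_self_eq_norm_sq, h0, ← hk y]
      have : ρ k y = ρ (k * k₀) x := by rw [map_mul]; rfl
      rw [this]
      have := hmin' (k * k₀)
      nlinarith [norm_nonneg (y - v), norm_nonneg (ρ (k * k₀) x - v)]
    have hzero := hlm.hasDerivAt_eq_zero hf
    have h0 : exp ((0:ℝ) • A) y = y := by simp [zero_smul, exp_zero]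
    rw [h0] at hzero
    have hsymm : (inner ℝ (y - v) (A y) : ℝ) = (inner ℝ (A y) (y - v) : ℝ) := real_inner_comm _ _
    have hAyy : (inner ℝ (A y) y : ℝ) = 0 := by
      have := hskew A hA y y
      have h2 : (inner ℝ y (A y) : ℝ) = (inner ℝ (A y) y : ℝ) := real_inner_comm _ _
      linarith
    have hAyv : (inner ℝ (A y) v : ℝ) = 0 := by
      rw [hsymm] at hzero
      have := inner_sub_right (𝕜 := ℝ) (A y) y v
      linarith
    have := hskew A hA y v
    rw [hAyv] at this
    have h2 : (inner ℝ (A v) y : ℝ) = (inner ℝ y (A v) : ℝ) := real_inner_comm _ _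
    linarith
  -- conclude y ∈ Tᗮ = Sec
  rw [hSec, Submodule.mem_orthogonal]
  intro u hu
  induction hu using Submodule.span_induction with
  | mem w hw => obtain ⟨A, hA, rfl⟩ := hw; exact key A hA
  | zero => simp
  | add a b _ _ ha hb => rw [inner_add_left, ha, hb, add_zero]
  | smul c a _ ha => rw [real_inner_smul_left, ha, mul_zero]
end
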